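/- If f ∈ BS(α) with 0 ≤ α < 1 and inverse function f^{-1}(w) = w + b_2 w² + b_3 w³ + ⋯ near 0, then |b_2| ≤ 1 and |b_3| ≤ 3/2. -/

import Mathlib

open Complex Metric Filter Set



private lemma id2_eq (F : ℂ → ℂ) : iteratedDeriv 2 F = deriv (deriv F) := by
  rw [show (2:ℕ) = 1 + 1 from rfl, iteratedDeriv_succ, iteratedDeriv_one]

private lemma id3_eq (F : ℂ → ℂ) : iteratedDeriv 3 F = deriv (deriv (deriv F)) := by
  rw [show (3:ℕ) = 2 + 1 from rfl, iteratedDeriv_succ, id2_eq]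

private lemma aderiv {F : ℂ → ℂ} {x : ℂ} (h : AnalyticAt ℂ F x) :
    AnalyticAt ℂ (deriv F) x := by
  have h2 : AnalyticOnNhd ℂ F {y | AnalyticAt ℂ F y} := fun y hy => hy
  exact h2.deriv x h

private lemma ev_deriv_mul {A B : ℂ → ℂ} {x : ℂ} (hA : AnalyticAt ℂ A x) (hB : AnalyticAt ℂ B x) :
    deriv (fun z => A z * B z) =ᶠ[nhds x] fun z => deriv A z * B z + A z * deriv B z := by
  filter_upwards [hA.eventually_analyticAt, hB.eventually_analyticAt] with z hAz hBz
  exact deriv_mul hAz.differentiableAt hBz.differentiableAt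

private lemma ev_deriv_add {A B : ℂ → ℂ} {x : ℂ} (hA : AnalyticAt ℂ A x) (hB : AnalyticAt ℂ B x) :
    deriv (fun z => A z + B z) =ᶠ[nhds x] fun z => deriv A z + deriv B z := by
  filter_upwards [hA.eventually_analyticAt, hB.eventually_analyticAt] with z hAz hBz
  exact deriv_add hAz.differentiableAt hBz.differentiableAt

private lemma d2_mul {A B : ℂ → ℂ} {x : ℂ} (hA : AnalyticAt ℂ A x) (hB : AnalyticAt ℂ B x) :
    deriv (deriv (fun z => A z * B z)) x =
      deriv (deriv A) x * B x + 2 * deriv A x * deriv B x + A x * deriv (deriv B) x := by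
  rw [(ev_deriv_mul hA hB).deriv_eq,
    deriv_fun_add (f := fun z => deriv A z * B z) (g := fun z => A z * deriv B z)
      (((aderiv hA).mul hB).differentiableAt) ((hA.mul (aderiv hB)).differentiableAt),
    deriv_fun_mul (aderiv hA).differentiableAt hB.differentiableAt,
    deriv_fun_mul hA.differentiableAt (aderiv hB).differentiableAt]
  ring

private lemma d3_mul {A B : ℂ → ℂ} {x : ℂ} (hA : AnalyticAt ℂ A x) (hB : AnalyticAt ℂ B x) :
    deriv (deriv (deriv (fun z => A z * B z))) x =
      deriv (deriv (deriv A)) x * B x + 3 * deriv (deriv A) x * deriv B x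
      + 3 * deriv A x * deriv (deriv B) x + A x * deriv (deriv (deriv B)) x := by
  have h1 : deriv (deriv (deriv (fun z => A z * B z))) x
      = deriv (deriv (fun z => deriv A z * B z + A z * deriv B z)) x :=
    ((ev_deriv_mul hA hB).deriv).deriv_eq
  have h2 : deriv (deriv (fun z => deriv A z * B z + A z * deriv B z)) x
      = deriv (deriv (fun z => deriv A z * B z)) x
        + deriv (deriv (fun z => A z * deriv B z)) x := by
    rw [(ev_deriv_add (A := fun z => deriv A z * B z) (B := fun z => A z * deriv B z)
        ((aderiv hA).mul hB) (hA.mul (aderiv hB))).deriv_eq,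
      deriv_fun_add (f := deriv (fun z => deriv A z * B z)) (g := deriv (fun z => A z * deriv B z))
        (aderiv ((aderiv hA).mul hB)).differentiableAt
        (aderiv (hA.mul (aderiv hB))).differentiableAt]
  rw [h1, h2, d2_mul (aderiv hA) hB, d2_mul hA (aderiv hB)]
  ring


private lemma key_ineq (a t : ℂ) (ha : ‖a‖ ≤ 1) (ht : ‖t‖ ≤ 1) :
    ‖t - a‖ ≤ ‖1 - (starRingEnd ℂ) a * t‖ := by
  have h1 : normSq (1 - (starRingEnd ℂ) a * t) - normSq (t - a)
      = (1 - normSq a) * (1 - normSq t) := by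
    simp [Complex.normSq_apply, Complex.sub_re, Complex.sub_im, Complex.mul_re, Complex.mul_im,
      Complex.conj_re, Complex.conj_im, Complex.one_re, Complex.one_im]
    ring
  have ha2 : normSq a ≤ 1 := by
    rw [← Complex.sq_norm]
    calc ‖a‖ ^ 2 ≤ 1 ^ 2 := by
          apply pow_le_pow_left₀ (norm_nonneg a) _ 2
          simpa using ha
      _ = 1 := one_pow 2
  have ht2 : normSq t ≤ 1 := by
    rw [← Complex.sq_norm]
    calc ‖t‖ ^ 2 ≤ 1 ^ 2 := by
          apply pow_le_pow_left₀ (norm_nonneg t) _ 2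
          simpa using ht
      _ = 1 := one_pow 2
  have h2 : normSq (t - a) ≤ normSq (1 - (starRingEnd ℂ) a * t) := by nlinarith
  rw [Complex.norm_def, Complex.norm_def]
  exact Real.sqrt_le_sqrt h2

private lemma schwarz_pick2 {w : ℂ → ℂ} (hw : DifferentiableOn ℂ w (ball 0 1)) (hw0 : w 0 = 0)
    (hmap : Set.MapsTo w (ball (0:ℂ) 1) (ball (0:ℂ) 1)) :
    ‖deriv (dslope w 0) 0‖ ≤ 1 - ‖deriv w 0‖ ^ 2 := by
  set v := dslope w 0 with hv
  have hvd : DifferentiableOn ℂ v (ball 0 1) :=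
    (differentiableOn_dslope (ball_mem_nhds 0 one_pos)).2 hw
  have hmaps' : Set.MapsTo w (ball 0 1) (ball (w 0) 1) := by rw [hw0]; exact hmap
  have hvb : ∀ z ∈ ball (0:ℂ) 1, ‖v z‖ ≤ 1 := fun z hz => by
    simpa using Complex.norm_dslope_le_div_of_mapsTo_ball hw (hmaps'.mono_right ball_subset_closedBall) hz
  have hv00 : v 0 = deriv w 0 := dslope_same w 0
  set a := v 0 with ha
  have hvA : AnalyticAt ℂ v 0 := hvd.analyticAt (ball_mem_nhds 0 one_pos)
  have hab : ‖a‖ ≤ 1 := hvb 0 (mem_ball_self one_pos)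
  rw [← hv00]
  rcases eq_or_lt_of_le hab with hone | hlt
  · -- max modulus: v constant
    have hmax : IsMaxOn (norm ∘ v) (ball (0:ℂ) 1) 0 := by
      intro z hz
      simp only [Function.comp_apply, Set.mem_setOf_eq]
      calc ‖v z‖ ≤ 1 := hvb z hz
        _ = ‖v 0‖ := hone.symm
    have heq := Complex.eqOn_of_isPreconnected_of_isMaxOn_norm
      (convex_ball (0:ℂ) 1).isPreconnected isOpen_ball hvd (mem_ball_self one_pos) hmax
    have hev : v =ᶠ[nhds (0:ℂ)] fun _ => v 0 :=
      Filter.eventuallyEq_of_mem (isOpen_ball.mem_nhds (mem_ball_self one_pos)) heq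
    rw [hev.deriv_eq, deriv_const]
    simp only [norm_zero]
    have h5 : ‖v 0‖ = 1 := hone
    rw [h5]
    norm_num
  · -- Möbius + Schwarz
    set Dn : ℂ → ℂ := fun z => 1 - (starRingEnd ℂ) a * v z with hDn
    have hDn0 : ∀ z ∈ ball (0:ℂ) 1, Dn z ≠ 0 := by
      intro z hz h0
      have h1 : (starRingEnd ℂ) a * v z = 1 := by
        have := sub_eq_zero.1 h0; linear_combination -this
      have h2 : ‖(starRingEnd ℂ) a * v z‖ ≤ ‖a‖ := by
        rw [norm_mul, RCLike.norm_conj]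
        calc ‖a‖ * ‖v z‖ ≤ ‖a‖ * 1 := by
              exact mul_le_mul_of_nonneg_left (hvb z hz) (norm_nonneg a)
          _ = ‖a‖ := mul_one _
      rw [h1, norm_one] at h2
      exact absurd (lt_of_le_of_lt h2 hlt) (lt_irrefl 1)
    set ψ : ℂ → ℂ := fun z => (v z - a) / Dn z with hψ
    have hψd : DifferentiableOn ℂ ψ (ball 0 1) :=
      DifferentiableOn.div (hvd.sub (differentiableOn_const a))
        ((differentiableOn_const 1).sub ((differentiableOn_const _).mul hvd)) hDn0
    have hψ0 : ψ 0 = 0 := by simp [hψ, ha]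
    have hψb : ∀ z ∈ ball (0:ℂ) 1, ‖ψ z‖ ≤ 1 := by
      intro z hz
      rw [hψ, norm_div]
      rcases eq_or_ne (Dn z) 0 with h | h
      · exact absurd h (hDn0 z hz)
      · rw [div_le_one (norm_pos_iff.2 h)]
        exact key_ineq a (v z) hab (hvb z hz)
    have hd1 : ‖deriv ψ 0‖ ≤ 1 := by
      refine le_of_forall_pos_le_add ?_
      intro ε hε
      have hmapsψ : Set.MapsTo ψ (ball (0:ℂ) 1) (ball (ψ 0) (1 + ε)) := by
        intro z hz
        rw [hψ0, mem_ball_zero_iff]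
        exact lt_of_le_of_lt (hψb z hz) (by linarith)
      have := Complex.norm_deriv_le_div_of_mapsTo_ball hψd (hmapsψ.mono_right ball_subset_closedBall) one_pos
      simpa using this
    -- compute deriv ψ 0
    have hd0 : Dn 0 = 1 - (starRingEnd ℂ) a * a := by simp [hDn, ha]
    have hDnd : DifferentiableAt ℂ Dn 0 :=
      (differentiableAt_const 1).sub ((differentiableAt_const _).mul hvA.differentiableAt)
    have hNd : DifferentiableAt ℂ (fun z => v z - a) 0 :=
      hvA.differentiableAt.sub (differentiableAt_const a)
    have hderivψ : deriv ψ 0 = deriv v 0 / (1 - (starRingEnd ℂ) a * a) := by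
      rw [hψ, deriv_fun_div hNd hDnd (hDn0 0 (mem_ball_self one_pos))]
      have h1 : deriv (fun z => v z - a) 0 = deriv v 0 := by
        simp [deriv_fun_sub hvA.differentiableAt (differentiableAt_const a)]
      have h2 : deriv Dn 0 = -((starRingEnd ℂ) a * deriv v 0) := by
        rw [hDn]
        rw [deriv_const_sub]
        rw [deriv_const_mul _ hvA.differentiableAt]
      rw [h1, h2, hd0]
      have h3 : v 0 - a = 0 := by rw [← ha, sub_self]
      rw [h3]
      have hne : (1 - (starRingEnd ℂ) a * a) ≠ 0 := by
        have := hDn0 0 (mem_ball_self one_pos); rwa [hd0] at this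
      field_simp
      ring
    have hcc : (starRingEnd ℂ) a * a = (normSq a : ℂ) := by
      rw [mul_comm, Complex.mul_conj]
    have hnsq : normSq a < 1 := by
      rw [← Complex.sq_norm]
      calc ‖a‖ ^ 2 ≤ ‖a‖ * 1 := by
            rw [sq]; exact mul_le_mul_of_nonneg_left (by simpa using hab)
              (norm_nonneg a)
        _ = ‖a‖ := mul_one _
        _ < 1 := by simpa using hlt
    have hnorm_d : ‖(1:ℂ) - (starRingEnd ℂ) a * a‖ = 1 - normSq a := by
      rw [hcc]
      rw [show (1:ℂ) - (normSq a : ℂ) = ((1 - normSq a : ℝ) : ℂ) by push_cast; ring]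
      rw [Complex.norm_real, Real.norm_eq_abs, abs_of_pos (by linarith)]
    have hfinal : ‖deriv v 0‖ ≤ 1 - normSq a := by
      have h4 : ‖deriv v 0‖ = ‖deriv ψ 0‖ * ‖(1:ℂ) - (starRingEnd ℂ) a * a‖ := by
        have hne' : ‖(1:ℂ) - (starRingEnd ℂ) a * a‖ ≠ 0 := by rw [hnorm_d]; linarith
        rw [hderivψ, norm_div, div_mul_cancel₀ _ hne']
      rw [h4, hnorm_d]
      calc ‖deriv ψ 0‖ * (1 - normSq a) ≤ 1 * (1 - normSq a) :=
            mul_le_mul_of_nonneg_right hd1 (by linarith)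
        _ = 1 - normSq a := one_mul _
    calc ‖deriv v 0‖ ≤ 1 - normSq a := hfinal
      _ = 1 - ‖v 0‖ ^ 2 := by rw [← ha, ← Complex.sq_norm]


private lemma aid (x : ℂ) : AnalyticAt ℂ (fun z : ℂ => z) x := analyticAt_id

private lemma dId : deriv (fun z : ℂ => z) = fun _ => (1:ℂ) :=
  funext fun z => deriv_id z

theorem inverse_coeff_bounds_BS (α : ℝ) (hα0 : 0 ≤ α) (hα1 : α < 1)
    (f : ℂ → ℂ) (hf : DifferentiableOn ℂ f (ball (0:ℂ) 1))
    (hf0 : f 0 = 0) (hf'0 : deriv f 0 = 1)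
    (hfne : ∀ z ∈ ball (0:ℂ) 1, z ≠ 0 → f z ≠ 0)
    (hsub : ∃ w : ℂ → ℂ, DifferentiableOn ℂ w (ball (0:ℂ) 1) ∧ w 0 = 0 ∧
      (∀ z ∈ ball (0:ℂ) 1, w z ∈ ball (0:ℂ) 1) ∧
      ∀ z ∈ ball (0:ℂ) 1, z ≠ 0 →
        z * deriv f z / f z - 1 = w z / (1 - (α : ℂ) * (w z) ^ 2))
    (g : ℂ → ℂ) (hg : AnalyticAt ℂ g 0) (hg0 : g 0 = 0)
    (hinv : ∀ᶠ z in nhds (0:ℂ), g (f z) = z) :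
    ‖iteratedDeriv 2 g 0 / 2‖ ≤ 1 ∧ ‖iteratedDeriv 3 g 0 / 6‖ ≤ 3 / 2 := by
  obtain ⟨w, hw, hw0, hwmap, heqw⟩ := hsub
  have hball : ball (0:ℂ) 1 ∈ nhds (0:ℂ) := ball_mem_nhds 0 one_pos
  have hfA : AnalyticAt ℂ f 0 := hf.analyticAt hball
  have hwA : AnalyticAt ℂ w 0 := hw.analyticAt hball
  have hwmap' : Set.MapsTo w (ball (0:ℂ) 1) (ball (0:ℂ) 1) := fun z hz => hwmap z hz
  set p := deriv (deriv f) 0 with hpdef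
  set q := deriv (deriv (deriv f)) 0 with hqdef
  set c1 := deriv w 0 with hc1def
  set r := deriv (deriv w) 0 with hrdef
  -- Part 1: product form of the subordination identity
  have hLR : (fun z => (z * deriv f z - f z) * (1 - (α:ℂ) * w z ^ 2))
      =ᶠ[nhds (0:ℂ)] (fun z => w z * f z) := by
    filter_upwards [hball] with z hz
    rcases eq_or_ne z 0 with rfl | hz0
    · simp [hf0, hw0]
    · have h1 := heqw z hz hz0
      have hfz := hfne z hz hz0
      have hwz : (1:ℂ) - (α:ℂ) * w z ^ 2 ≠ 0 := by
        intro h0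
        have h1' : (α:ℂ) * w z ^ 2 = 1 := by
          have := sub_eq_zero.1 h0; linear_combination -this
        have h2 : ‖(α:ℂ) * w z ^ 2‖ < 1 := by
          rw [norm_mul, norm_pow]
          have hwlt : ‖w z‖ < 1 := by
            have := hwmap z hz; rwa [mem_ball_zero_iff] at this
          have hwa : ‖((α:ℝ):ℂ)‖ ≤ α := by
            rw [Complex.norm_real, Real.norm_eq_abs, _root_.abs_of_nonneg hα0]
          calc ‖(α:ℂ)‖ * ‖w z‖ ^ 2 ≤ α * 1 := by
                apply mul_le_mul hwa _ (by positivity) hα0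
                calc ‖w z‖ ^ 2 ≤ 1 ^ 2 := by
                      apply pow_le_pow_left₀ (norm_nonneg _) hwlt.le
                  _ = 1 := one_pow 2
            _ = α := mul_one α
            _ < 1 := hα1
        rw [h1', norm_one] at h2
        exact absurd h2 (lt_irrefl 1)
      have h3 : z * deriv f z / f z - 1 = (z * deriv f z - f z) / f z := by
        field_simp
      rw [h3, div_eq_div_iff hfz hwz] at h1
      linear_combination h1
  -- analyticity of the two factors
  have hDA : AnalyticAt ℂ (fun z : ℂ => z * deriv f z - f z) 0 :=
    ((analyticAt_id).mul (aderiv hfA)).sub hfA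
  have hEA : AnalyticAt ℂ (fun z : ℂ => 1 - (α:ℂ) * w z ^ 2) 0 :=
    (analyticAt_const).sub (analyticAt_const.mul (hwA.pow 2))
  -- derivative facts for D
  have hD1 : deriv (fun z : ℂ => z * deriv f z - f z)
      =ᶠ[nhds (0:ℂ)] fun z => z * deriv (deriv f) z := by
    filter_upwards [hfA.eventually_analyticAt, (aderiv hfA).eventually_analyticAt] with z h1 h2
    rw [deriv_fun_sub (f := fun z => z * deriv f z) (differentiableAt_fun_id.mul h2.differentiableAt) h1.differentiableAt,
      deriv_fun_mul differentiableAt_fun_id h2.differentiableAt]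
    simp
  have hD'0 : deriv (fun z : ℂ => z * deriv f z - f z) 0 = 0 := by
    have := hD1.self_of_nhds; rw [this]; simp
  have hD''0 : deriv (deriv (fun z : ℂ => z * deriv f z - f z)) 0 = p := by
    rw [hD1.deriv_eq, deriv_fun_mul differentiableAt_fun_id (aderiv (aderiv hfA)).differentiableAt]
    simp [hpdef]
  have hD'''0 : deriv (deriv (deriv (fun z : ℂ => z * deriv f z - f z))) 0 = 2 * q := by
    rw [(hD1.deriv).deriv_eq, d2_mul (aid 0) (aderiv (aderiv hfA))]
    rw [dId]
    simp [hqdef]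
  -- derivative facts for E
  have hE'0 : deriv (fun z : ℂ => 1 - (α:ℂ) * w z ^ 2) 0 = 0 := by
    rw [deriv_const_sub, deriv_const_mul (d := fun z => w z ^ 2) _ (hwA.differentiableAt.pow 2),
      deriv_fun_pow hwA.differentiableAt 2]
    simp [hw0]
  -- second derivative identity: p = 2 c1
  have hp : p = 2 * c1 := by
    have hLhs := (hLR.deriv).deriv_eq
    rw [d2_mul hDA hEA, d2_mul hwA hfA] at hLhs
    rw [hD''0, hD'0, hE'0] at hLhs
    simp [hf0, hw0, hf'0] at hLhs
    linear_combination hLhs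
  -- third derivative identity: 2 q = 3 r + 3 c1 p
  have hq : 2 * q = 3 * r + 3 * c1 * p := by
    have hLhs := ((hLR.deriv).deriv).deriv_eq
    rw [d3_mul hDA hEA, d3_mul hwA hfA] at hLhs
    rw [hD'''0, hD''0, hD'0, hE'0] at hLhs
    simp [hf0, hw0, hf'0] at hLhs
    linear_combination hLhs
  -- Part 3: derivatives of g
  have hgfA : ∀ᶠ z in nhds (0:ℂ), AnalyticAt ℂ g (f z) := by
    have hc : ContinuousAt f 0 := hfA.continuousAt
    have ht : Tendsto f (nhds 0) (nhds 0) := by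
      have := hc.tendsto; rwa [hf0] at this
    exact ht.eventually hg.eventually_analyticAt
  have hgfid : (fun z => g (f z)) =ᶠ[nhds (0:ℂ)] (fun z : ℂ => z) := hinv
  have h1 : (fun z => deriv g (f z) * deriv f z) =ᶠ[nhds (0:ℂ)] fun _ => (1:ℂ) := by
    filter_upwards [hgfid.deriv, hfA.eventually_analyticAt, hgfA] with z he hfz hgz
    have hcomp : deriv (fun z => g (f z)) z = deriv g (f z) * deriv f z :=
      deriv_comp z hgz.differentiableAt hfz.differentiableAt
    rw [← hcomp, he, dId]
  have hg'0 : deriv g 0 = 1 := by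
    have this2 : deriv g (f 0) * deriv f 0 = 1 := h1.self_of_nhds
    rw [hf0, hf'0, mul_one] at this2
    exact this2
  have h2 : (fun z => deriv (deriv g) (f z) * deriv f z * deriv f z
      + deriv g (f z) * deriv (deriv f) z) =ᶠ[nhds (0:ℂ)] fun _ => (0:ℂ) := by
    filter_upwards [h1.deriv, hfA.eventually_analyticAt, hgfA] with z he hfz hgz
    have hdg : DifferentiableAt ℂ (fun z => deriv g (f z)) z :=
      ((aderiv hgz).comp hfz).differentiableAt
    have hstep : deriv (fun z => deriv g (f z) * deriv f z) z
        = deriv (deriv g) (f z) * deriv f z * deriv f z + deriv g (f z) * deriv (deriv f) z := by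
      rw [deriv_fun_mul hdg (aderiv hfz).differentiableAt]
      have hcomp : deriv (fun z => deriv g (f z)) z = deriv (deriv g) (f z) * deriv f z :=
        deriv_comp z (aderiv hgz).differentiableAt hfz.differentiableAt
      rw [hcomp]
    rw [← hstep, he, deriv_const]
  have hg''0 : deriv (deriv g) 0 = -p := by
    have this2 : deriv (deriv g) (f 0) * deriv f 0 * deriv f 0
        + deriv g (f 0) * deriv (deriv f) 0 = 0 := h2.self_of_nhds
    rw [hf0, hf'0, hg'0] at this2
    simp at this2
    linear_combination this2
  have hg'''0 : deriv (deriv (deriv g)) 0 = 3 * p ^ 2 - q := by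
    have hd0 := h2.deriv_eq
    rw [deriv_const] at hd0
    -- expand the derivative of the LHS of h2 at 0
    have hgA2 : AnalyticAt ℂ (deriv (deriv g)) 0 := aderiv (aderiv hg)
    have hgA1 : AnalyticAt ℂ (deriv g) 0 := aderiv hg
    have hT1d : DifferentiableAt ℂ (fun z => deriv (deriv g) (f z)) 0 := by
      have : AnalyticAt ℂ (deriv (deriv g)) (f 0) := by rwa [hf0]
      exact (this.comp hfA).differentiableAt
    have hT1d' : DifferentiableAt ℂ (fun z => deriv (deriv g) (f z) * deriv f z) 0 :=
      hT1d.mul (aderiv hfA).differentiableAt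
    have hT1d'' : DifferentiableAt ℂ
        (fun z => deriv (deriv g) (f z) * deriv f z * deriv f z) 0 :=
      hT1d'.mul (aderiv hfA).differentiableAt
    have hT2a : DifferentiableAt ℂ (fun z => deriv g (f z)) 0 := by
      have : AnalyticAt ℂ (deriv g) (f 0) := by rwa [hf0]
      exact (this.comp hfA).differentiableAt
    have hT2d : DifferentiableAt ℂ (fun z => deriv g (f z) * deriv (deriv f) z) 0 :=
      hT2a.mul (aderiv (aderiv hfA)).differentiableAt
    have hcomp2 : deriv (fun z => deriv (deriv g) (f z)) 0
        = deriv (deriv (deriv g)) 0 * deriv f 0 := by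
      have h : AnalyticAt ℂ (deriv (deriv g)) (f 0) := by rwa [hf0]
      have : deriv (fun z => deriv (deriv g) (f z)) (0:ℂ) = deriv (deriv (deriv g)) (f 0) * deriv f 0 :=
        deriv_comp 0 h.differentiableAt hfA.differentiableAt
      rwa [hf0] at this
    have hcomp1 : deriv (fun z => deriv g (f z)) 0 = deriv (deriv g) 0 * deriv f 0 := by
      have h : AnalyticAt ℂ (deriv g) (f 0) := by rwa [hf0]
      have : deriv (fun z => deriv g (f z)) (0:ℂ) = deriv (deriv g) (f 0) * deriv f 0 :=
        deriv_comp 0 h.differentiableAt hfA.differentiableAt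
      rwa [hf0] at this
    rw [deriv_fun_add hT1d'' hT2d, deriv_fun_mul hT1d' (aderiv hfA).differentiableAt,
      deriv_fun_mul hT1d (aderiv hfA).differentiableAt,
      deriv_fun_mul hT2a (aderiv (aderiv hfA)).differentiableAt,
      hcomp2, hcomp1] at hd0
    rw [hf0, hf'0, hg'0, hg''0] at hd0
    simp at hd0
    linear_combination hd0
  -- Schwarz bounds
  have hc1b : ‖c1‖ ≤ 1 := by
    have := Complex.norm_deriv_le_one_of_mapsTo_ball hw
      (by rw [hw0]; exact hwmap'.mono_right ball_subset_closedBall) one_pos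
    simpa [hc1def] using this
  -- r = 2 * deriv (dslope w 0) 0
  have hvA : AnalyticAt ℂ (dslope w 0) 0 :=
    ((differentiableOn_dslope hball).2 hw).analyticAt hball
  have hwv : w = fun z => z * dslope w 0 z := by
    funext z
    have := sub_smul_dslope w 0 z
    rw [hw0, sub_zero, sub_zero, smul_eq_mul] at this
    exact this.symm
  have hr2 : r = 2 * deriv (dslope w 0) 0 := by
    have key : deriv (deriv (fun z : ℂ => z * dslope w 0 z)) 0 = 2 * deriv (dslope w 0) 0 := by
      rw [d2_mul (aid 0) hvA, dId]
      simp
    rw [hrdef]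
    conv_lhs => rw [hwv]
    exact key
  have hrb : ‖r‖ ≤ 2 * (1 - ‖c1‖ ^ 2) := by
    have := schwarz_pick2 hw hw0 hwmap'
    rw [hr2, norm_mul]
    simp only [Complex.norm_ofNat]
    calc (2:ℝ) * ‖deriv (dslope w 0) 0‖ ≤ 2 * (1 - ‖deriv w 0‖ ^ 2) := by
          apply mul_le_mul_of_nonneg_left this (by norm_num)
      _ = 2 * (1 - ‖c1‖ ^ 2) := by rw [hc1def]
  -- Final assembly
  constructor
  · rw [id2_eq, hg''0, hp]
    have : -(2 * c1) / 2 = -c1 := by ring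
    rw [this, norm_neg]
    exact hc1b
  · rw [id3_eq, hg'''0]
    have hval : (3 * p ^ 2 - q) / 6 = (6 * c1 ^ 2 - r) / 4 := by
      field_simp
      linear_combination (12 * p + 24 * c1 - 6 * c1) * hp - 2 * hq
    rw [hval]
    have hns : ‖(6 * c1 ^ 2 - r) / 4‖ = ‖6 * c1 ^ 2 - r‖ / 4 := by
      rw [norm_div]; norm_num
    rw [hns]
    have h6 : ‖6 * c1 ^ 2 - r‖ ≤ 6 * ‖c1‖ ^ 2 + ‖r‖ := by
      calc ‖6 * c1 ^ 2 - r‖ ≤ ‖6 * c1 ^ 2‖ + ‖r‖ := norm_sub_le _ _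
        _ = 6 * ‖c1‖ ^ 2 + ‖r‖ := by rw [norm_mul, norm_pow]; norm_num
    have ht2 : ‖c1‖ ^ 2 ≤ 1 := by
      calc ‖c1‖ ^ 2 ≤ 1 ^ 2 := pow_le_pow_left₀ (norm_nonneg _) hc1b 2
        _ = 1 := one_pow 2
    nlinarith [norm_nonneg r, norm_nonneg c1]
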